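/- Let 𝒳, 𝒴 be finite Markov chains with |X| = n, |Y| = m, let C be a cost matrix and δ ∈ [0,1]. Define matrices C^{δ,(0)} := C and C^{δ,(l+1)}_{ij} := δ C_{ij} + (1−δ) d_W(m^X_i, m^Y_j; C^{δ,(l)}). Then for every k ∈ ℕ, d_WL^{δ,(k)}(𝒳,𝒴;C) = d_W(ν^X, ν^Y; C^{δ,(k)}). -/

import Mathlib

open scoped BigOperators
open Filter Topology

/-- A probability vector on a finite type. -/
def IsProb {X : Type*} [Fintype X] (ν : X → ℝ) : Prop :=
  (∀ x, 0 ≤ ν x) ∧ ∑ x, ν x = 1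

/-- `μ` is a coupling of `α` and `β`. -/
def IsCoupling {X Y : Type*} [Fintype X] [Fintype Y]
    (μ : X × Y → ℝ) (α : X → ℝ) (β : Y → ℝ) : Prop :=
  (∀ z, 0 ≤ μ z) ∧ (∀ x, ∑ y, μ (x, y) = α x) ∧ (∀ y, ∑ x, μ (x, y) = β y)

/-- A finite Markov chain: a transition kernel together with an initial distribution. -/
structure MarkovChain (X : Type*) [Fintype X] where
  kernel : X → X → ℝ
  init : X → ℝ
  kernel_prob : ∀ x, IsProb (kernel x)
  init_prob : IsProb init

/-- A Markovian coupling between two finite Markov chains.  `trans t` is the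
transition coupling used from time `t` to time `t+1` (i.e. `m^{(t+1)}`). -/
structure MarkovCoupling {X Y : Type*} [Fintype X] [Fintype Y]
    (MX : MarkovChain X) (MY : MarkovChain Y) where
  init : X × Y → ℝ
  trans : ℕ → X × Y → X × Y → ℝ
  init_coupling : IsCoupling init MX.init MY.init
  trans_coupling : ∀ t xy, IsCoupling (trans t xy) (MX.kernel xy.1) (MY.kernel xy.2)

/-- Time-`t` law determined by an initial distribution and step kernels. -/
noncomputable def lawAux {X Y : Type*} [Fintype X] [Fintype Y]
    (ν : X × Y → ℝ) (m : ℕ → X × Y → X × Y → ℝ) : ℕ → X × Y → ℝ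
  | 0 => ν
  | t + 1 => fun z => ∑ w : X × Y, m t w z * lawAux ν m t w

/-- The time-`t` law of a Markovian coupling. -/
noncomputable def MarkovCoupling.law {X Y : Type*} [Fintype X] [Fintype Y]
    {MX : MarkovChain X} {MY : MarkovChain Y} (π : MarkovCoupling MX MY) :
    ℕ → X × Y → ℝ :=
  lawAux π.init π.trans

/-- `p` is a probability distribution on `ℕ`. -/
def IsProbNat (p : ℕ → ℝ) : Prop := (∀ t, 0 ≤ p t) ∧ HasSum p 1

/-- The Optimal Transport Markov (OTM) distance associated to `p`. -/
noncomputable def dOTM {X Y : Type*} [Fintype X] [Fintype Y] (p : ℕ → ℝ)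
    (MX : MarkovChain X) (MY : MarkovChain Y) (C : X × Y → ℝ) : ℝ :=
  ⨅ π : MarkovCoupling MX MY, ∑' t, p t * ∑ z : X × Y, C z * π.law t z

/-- The geometric distribution `p_δ^∞` on `ℕ`. -/
noncomputable def pGeom (δ : ℝ) : ℕ → ℝ := fun t => δ * (1 - δ) ^ t

/-- The truncation `p_δ^k` of the geometric distribution at `k`. -/
noncomputable def pTrunc (δ : ℝ) (k : ℕ) : ℕ → ℝ := fun t =>
  if t < k then δ * (1 - δ) ^ t else if t = k then (1 - δ) ^ k else 0

/-- The optimal transport cost between `α` and `β` with cost matrix `C`. -/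
noncomputable def dW {X Y : Type*} [Fintype X] [Fintype Y]
    (α : X → ℝ) (β : Y → ℝ) (C : X × Y → ℝ) : ℝ :=
  ⨅ μ : {μ : X × Y → ℝ // IsCoupling μ α β}, ∑ z : X × Y, C z * μ.1 z

/-- The recursively defined cost matrices `C^{δ,(l)}`. -/
noncomputable def Cmat {X Y : Type*} [Fintype X] [Fintype Y]
    (MX : MarkovChain X) (MY : MarkovChain Y) (C : X × Y → ℝ) (δ : ℝ) :
    ℕ → X × Y → ℝ
  | 0 => C
  | l + 1 => fun z =>
      δ * C z + (1 - δ) * dW (MX.kernel z.1) (MY.kernel z.2) (Cmat MX MY C δ l)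

namespace Stmt9Aux

variable {X Y : Type*} [Fintype X] [Fintype Y]

lemma prod_coupling {α : X → ℝ} {β : Y → ℝ} (hα : IsProb α) (hβ : IsProb β) :
    IsCoupling (fun z : X × Y => α z.1 * β z.2) α β := by
  refine ⟨fun z => mul_nonneg (hα.1 z.1) (hβ.1 z.2), fun x => ?_, fun y => ?_⟩
  · show ∑ y, α x * β y = α x
    rw [← Finset.mul_sum, hβ.2, mul_one]
  · show ∑ x, α x * β y = β y
    rw [← Finset.sum_mul, hα.2, one_mul]

lemma dW_exists (α : X → ℝ) (β : Y → ℝ) (hα : IsProb α) (hβ : IsProb β) (D : X × Y → ℝ) :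
    ∃ μ : X × Y → ℝ, IsCoupling μ α β ∧ (∑ z, D z * μ z) = dW α β D ∧
      ∀ μ', IsCoupling μ' α β → dW α β D ≤ ∑ z, D z * μ' z := by
  have hne : Set.Nonempty {μ : X × Y → ℝ | IsCoupling μ α β} :=
    ⟨_, prod_coupling hα hβ⟩
  have hclosed : IsClosed {μ : X × Y → ℝ | IsCoupling μ α β} := by
    have h1 : IsClosed {μ : X × Y → ℝ | ∀ z, 0 ≤ μ z} := by
      rw [Set.setOf_forall]
      exact isClosed_iInter fun z => isClosed_le continuous_const (continuous_apply z)
    have h2 : IsClosed {μ : X × Y → ℝ | ∀ x, ∑ y, μ (x, y) = α x} := by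
      rw [Set.setOf_forall]
      exact isClosed_iInter fun x =>
        isClosed_eq (continuous_finset_sum _ fun y _ => continuous_apply (x, y)) continuous_const
    have h3 : IsClosed {μ : X × Y → ℝ | ∀ y, ∑ x, μ (x, y) = β y} := by
      rw [Set.setOf_forall]
      exact isClosed_iInter fun y =>
        isClosed_eq (continuous_finset_sum _ fun x _ => continuous_apply (x, y)) continuous_const
    exact h1.inter (h2.inter h3)
  have hsub : {μ : X × Y → ℝ | IsCoupling μ α β} ⊆
      Set.pi Set.univ (fun _ : X × Y => Set.Icc (0:ℝ) 1) := by
    intro μ hμ z _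
    refine ⟨hμ.1 z, ?_⟩
    have h1 : μ z ≤ α z.1 := by
      rw [← hμ.2.1 z.1]
      exact Finset.single_le_sum (fun y _ => hμ.1 (z.1, y)) (Finset.mem_univ z.2)
    have h2 : α z.1 ≤ 1 := by
      rw [← hα.2]
      exact Finset.single_le_sum (fun x _ => hα.1 x) (Finset.mem_univ z.1)
    linarith
  have hcpt : IsCompact {μ : X × Y → ℝ | IsCoupling μ α β} :=
    IsCompact.of_isClosed_subset (isCompact_univ_pi fun _ => isCompact_Icc) hclosed hsub
  have hf : Continuous fun μ : X × Y → ℝ => ∑ z, D z * μ z :=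
    continuous_finset_sum _ fun z _ => continuous_const.mul (continuous_apply z)
  obtain ⟨μs, hmem, hmin⟩ := hcpt.exists_isMinOn hne hf.continuousOn
  have hbdd : BddBelow (Set.range fun μ : {μ : X × Y → ℝ // IsCoupling μ α β} =>
      ∑ z : X × Y, D z * μ.1 z) := by
    refine ⟨∑ z, D z * μs z, ?_⟩
    rintro _ ⟨μ', rfl⟩
    exact hmin μ'.2
  have hle : ∀ μ', IsCoupling μ' α β → dW α β D ≤ ∑ z, D z * μ' z := by
    intro μ' h'
    exact ciInf_le hbdd ⟨μ', h'⟩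
  haveI : Nonempty {μ : X × Y → ℝ // IsCoupling μ α β} := ⟨⟨_, prod_coupling hα hβ⟩⟩
  refine ⟨μs, hmem, le_antisymm ?_ (hle _ hmem), hle⟩
  exact le_ciInf fun μ' => hmin μ'.2


lemma pTrunc_nonneg {δ : ℝ} (hδ0 : 0 ≤ δ) (hδ1 : δ ≤ 1) (k t : ℕ) : 0 ≤ pTrunc δ k t := by
  have h1 : (0:ℝ) ≤ 1 - δ := by linarith
  unfold pTrunc; split_ifs <;> positivity

lemma pTrunc_eq_zero {δ : ℝ} {k t : ℕ} (h : k < t) : pTrunc δ k t = 0 := by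
  unfold pTrunc; rw [if_neg (by omega), if_neg (by omega)]

lemma pTrunc_succ_succ (δ : ℝ) (k t : ℕ) :
    pTrunc δ (k+1) (t+1) = (1-δ) * pTrunc δ k t := by
  unfold pTrunc
  rcases lt_trichotomy t k with h | h | h
  · rw [if_pos (by omega), if_pos h]; ring
  · subst h; rw [if_neg (by omega), if_pos rfl, if_neg (by omega), if_pos rfl]; ring
  · rw [if_neg (by omega), if_neg (by omega), if_neg (by omega), if_neg (by omega)]; ring

/-- finite-horizon cost functional -/
noncomputable def Fc (C : X × Y → ℝ) (δ : ℝ) (k : ℕ) (ν : X × Y → ℝ)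
    (m : ℕ → X × Y → X × Y → ℝ) : ℝ :=
  ∑ t ∈ Finset.range (k+1), pTrunc δ k t * ∑ z, C z * lawAux ν m t z

lemma tsum_pTrunc_eq (δ : ℝ) (k : ℕ) (g : ℕ → ℝ) :
    ∑' t, pTrunc δ k t * g t = ∑ t ∈ Finset.range (k+1), pTrunc δ k t * g t := by
  refine tsum_eq_sum ?_
  intro t ht
  rw [pTrunc_eq_zero (by simp [Finset.mem_range] at ht; omega), zero_mul]

lemma lawAux_shift (ν : X × Y → ℝ) (m : ℕ → X × Y → X × Y → ℝ) :
    ∀ t z, lawAux ν m (t+1) z = ∑ w, ν w * lawAux (m 0 w) (fun s => m (s+1)) t z := by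
  intro t
  induction t with
  | zero =>
    intro z
    simp only [lawAux]
    exact Finset.sum_congr rfl fun w _ => mul_comm _ _
  | succ t ih =>
    intro z
    show ∑ w, m (t+1) w z * lawAux ν m (t+1) w = _
    simp only [ih]
    simp only [Finset.mul_sum]
    rw [Finset.sum_comm]
    refine Finset.sum_congr rfl fun u _ => ?_
    show _ = ν u * ∑ w, m (t+1) w z * lawAux (m 0 u) (fun s => m (s+1)) t w
    rw [Finset.mul_sum]
    exact Finset.sum_congr rfl fun w _ => by ring

lemma inner_swap (C ν : X × Y → ℝ) (g : X × Y → X × Y → ℝ) :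
    ∑ z, C z * ∑ w, ν w * g w z = ∑ w, ν w * ∑ z, C z * g w z := by
  simp only [Finset.mul_sum]
  rw [Finset.sum_comm]
  exact Finset.sum_congr rfl fun w _ => Finset.sum_congr rfl fun z _ => by ring

lemma Fc_succ (C : X × Y → ℝ) (δ : ℝ) (k : ℕ) (ν : X × Y → ℝ)
    (m : ℕ → X × Y → X × Y → ℝ) :
    Fc C δ (k+1) ν m
      = δ * (∑ z, C z * ν z)
        + (1-δ) * ∑ w, ν w * Fc C δ k (m 0 w) (fun s => m (s+1)) := by
  have h0 : pTrunc δ (k+1) 0 = δ := by unfold pTrunc; rw [if_pos (by omega)]; ring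
  have hstep : ∀ t, pTrunc δ (k+1) (t+1) * ∑ z, C z * lawAux ν m (t+1) z
      = (1-δ) * (pTrunc δ k t * ∑ w, ν w * ∑ z, C z * lawAux (m 0 w) (fun s => m (s+1)) t z) := by
    intro t
    rw [pTrunc_succ_succ]
    have h1 : ∑ z, C z * lawAux ν m (t+1) z
        = ∑ w, ν w * ∑ z, C z * lawAux (m 0 w) (fun s => m (s+1)) t z := by
      rw [show (∑ z, C z * lawAux ν m (t+1) z)
          = ∑ z, C z * ∑ w, ν w * lawAux (m 0 w) (fun s => m (s+1)) t z from
        Finset.sum_congr rfl fun z _ => by rw [lawAux_shift]]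
      exact inner_swap C ν _
    rw [h1]; ring
  calc Fc C δ (k+1) ν m
      = ∑ t ∈ Finset.range (k+1), pTrunc δ (k+1) (t+1) * ∑ z, C z * lawAux ν m (t+1) z
          + pTrunc δ (k+1) 0 * ∑ z, C z * lawAux ν m 0 z := by
        unfold Fc; exact Finset.sum_range_succ' _ _
    _ = ∑ t ∈ Finset.range (k+1),
          (1-δ) * (pTrunc δ k t * ∑ w, ν w * ∑ z, C z * lawAux (m 0 w) (fun s => m (s+1)) t z)
          + δ * ∑ z, C z * ν z := by
        rw [h0]
        congr 1
        exact Finset.sum_congr rfl fun t _ => hstep t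
    _ = (1-δ) * (∑ w, ν w * Fc C δ k (m 0 w) (fun s => m (s+1))) + δ * ∑ z, C z * ν z := by
        rw [← Finset.mul_sum]
        congr 2
        unfold Fc
        simp only [Finset.mul_sum]
        rw [Finset.sum_comm]
        exact Finset.sum_congr rfl fun w _ => Finset.sum_congr rfl fun t _ =>
          Finset.sum_congr rfl fun x _ => by ring
    _ = δ * (∑ z, C z * ν z) + (1-δ) * ∑ w, ν w * Fc C δ k (m 0 w) (fun s => m (s+1)) := by
        ring

lemma lawAux_nonneg {ν : X × Y → ℝ} {m : ℕ → X × Y → X × Y → ℝ}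
    (hν : ∀ z, 0 ≤ ν z) (hm : ∀ t w z, 0 ≤ m t w z) :
    ∀ t z, 0 ≤ lawAux ν m t z
  | 0, z => hν z
  | t+1, z => Finset.sum_nonneg fun w _ =>
      mul_nonneg (hm t w z) (lawAux_nonneg hν hm t w)

instance instNonemptyMC (MX : MarkovChain X) (MY : MarkovChain Y) :
    Nonempty (MarkovCoupling MX MY) :=
  ⟨⟨fun z => MX.init z.1 * MY.init z.2,
    fun _ w z => MX.kernel w.1 z.1 * MY.kernel w.2 z.2,
    prod_coupling MX.init_prob MY.init_prob,
    fun _ w => prod_coupling (MX.kernel_prob w.1) (MY.kernel_prob w.2)⟩⟩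

lemma cost_eq {MX : MarkovChain X} {MY : MarkovChain Y} (π : MarkovCoupling MX MY)
    (C : X × Y → ℝ) (δ : ℝ) (k : ℕ) :
    (∑' t, pTrunc δ k t * ∑ z, C z * π.law t z) = Fc C δ k π.init π.trans :=
  tsum_pTrunc_eq δ k _

lemma cost_nonneg {MX : MarkovChain X} {MY : MarkovChain Y} (π : MarkovCoupling MX MY)
    {C : X × Y → ℝ} (hC : ∀ z, 0 ≤ C z) {δ : ℝ} (hδ0 : 0 ≤ δ) (hδ1 : δ ≤ 1) (k : ℕ) :
    0 ≤ ∑' t, pTrunc δ k t * ∑ z, C z * π.law t z := by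
  rw [cost_eq]
  refine Finset.sum_nonneg fun t _ => mul_nonneg (pTrunc_nonneg hδ0 hδ1 k t) ?_
  refine Finset.sum_nonneg fun z _ => mul_nonneg (hC z) ?_
  exact lawAux_nonneg π.init_coupling.1 (fun t w z => (π.trans_coupling t w).1 z) t z

lemma dOTM_bddBelow (MX : MarkovChain X) (MY : MarkovChain Y)
    {C : X × Y → ℝ} (hC : ∀ z, 0 ≤ C z) {δ : ℝ} (hδ0 : 0 ≤ δ) (hδ1 : δ ≤ 1) (k : ℕ) :
    BddBelow (Set.range fun π : MarkovCoupling MX MY =>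
      ∑' t, pTrunc δ k t * ∑ z : X × Y, C z * π.law t z) := by
  refine ⟨0, ?_⟩
  rintro _ ⟨π, rfl⟩
  exact cost_nonneg π hC hδ0 hδ1 k

lemma Cmat_kernels (MX MX' : MarkovChain X) (MY MY' : MarkovChain Y)
    (C : X × Y → ℝ) (δ : ℝ) (hX : MX'.kernel = MX.kernel) (hY : MY'.kernel = MY.kernel) :
    ∀ l, Cmat MX' MY' C δ l = Cmat MX MY C δ l := by
  intro l
  induction l with
  | zero => rfl
  | succ l ih => funext z; simp only [Cmat, hX, hY, ih]

/-- Upper bound: construct an optimal Markovian coupling. -/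
lemma dOTM_le_dW (MX : MarkovChain X) (MY : MarkovChain Y)
    (C : X × Y → ℝ) (hC : ∀ z, 0 ≤ C z) (δ : ℝ) (hδ0 : 0 ≤ δ) (hδ1 : δ ≤ 1) (k : ℕ) :
    dOTM (pTrunc δ k) MX MY C ≤ dW MX.init MY.init (Cmat MX MY C δ k) := by
  choose σ hσc hσe _ using fun (l : ℕ) (w : X × Y) =>
    dW_exists (MX.kernel w.1) (MY.kernel w.2) (MX.kernel_prob w.1) (MY.kernel_prob w.2)
      (Cmat MX MY C δ l)
  obtain ⟨μs, hμc, hμe, -⟩ :=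
    dW_exists MX.init MY.init MX.init_prob MY.init_prob (Cmat MX MY C δ k)
  have key : ∀ (l : ℕ) (ν : X × Y → ℝ),
      Fc C δ l ν (fun t w => σ (l-1-t) w) = ∑ w, ν w * Cmat MX MY C δ l w := by
    intro l
    induction l with
    | zero =>
      intro ν
      unfold Fc
      rw [Finset.sum_range_one]
      have h1 : pTrunc δ 0 0 = 1 := by unfold pTrunc; norm_num
      rw [h1, one_mul]
      exact Finset.sum_congr rfl fun w _ => mul_comm _ _
    | succ l ih =>
      intro ν
      have hm : (fun t (w : X × Y) => σ (l+1-1-t) w) = fun t w => σ (l - t) w := rfl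
      rw [hm, Fc_succ]
      have hsh : (fun s (w' : X × Y) => σ (l - (s+1)) w') = fun s w' => σ (l-1-s) w' := by
        funext s w'
        have h5 : l - (s+1) = l - 1 - s := by omega
        rw [h5]
      have hterm : ∀ w : X × Y,
          Fc C δ l (σ (l-0) w) (fun s w' => σ (l - (s+1)) w')
            = dW (MX.kernel w.1) (MY.kernel w.2) (Cmat MX MY C δ l) := by
        intro w
        rw [hsh, ih, ← hσe l w]
        exact Finset.sum_congr rfl fun z _ => mul_comm _ _
      simp only [hterm]
      show δ * ∑ z, C z * ν z
          + (1-δ) * ∑ w, ν w * dW (MX.kernel w.1) (MY.kernel w.2) (Cmat MX MY C δ l)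
          = ∑ w, ν w * (δ * C w + (1-δ) * dW (MX.kernel w.1) (MY.kernel w.2) (Cmat MX MY C δ l))
      rw [Finset.mul_sum, Finset.mul_sum, ← Finset.sum_add_distrib]
      exact Finset.sum_congr rfl fun w _ => by ring
  set π : MarkovCoupling MX MY :=
    ⟨μs, fun t w => σ (k-1-t) w, hμc, fun t w => hσc (k-1-t) w⟩ with hπ
  calc dOTM (pTrunc δ k) MX MY C
      ≤ ∑' t, pTrunc δ k t * ∑ z : X × Y, C z * π.law t z :=
        ciInf_le (dOTM_bddBelow MX MY hC hδ0 hδ1 k) π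
    _ = Fc C δ k μs (fun t w => σ (k-1-t) w) := cost_eq π C δ k
    _ = ∑ w, μs w * Cmat MX MY C δ k w := key k μs
    _ = ∑ z, Cmat MX MY C δ k z * μs z :=
        Finset.sum_congr rfl fun w _ => mul_comm _ _
    _ = dW MX.init MY.init (Cmat MX MY C δ k) := hμe

/-- Lower bound, by induction on the horizon. -/
lemma dW_le_dOTM (C : X × Y → ℝ) (hC : ∀ z, 0 ≤ C z)
    (δ : ℝ) (hδ0 : 0 ≤ δ) (hδ1 : δ ≤ 1) :
    ∀ (k : ℕ) (MX : MarkovChain X) (MY : MarkovChain Y),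
      dW MX.init MY.init (Cmat MX MY C δ k) ≤ dOTM (pTrunc δ k) MX MY C := by
  intro k
  induction k with
  | zero =>
    intro MX MY
    refine le_ciInf fun π => ?_
    rw [cost_eq]
    have h1 : Fc C δ 0 π.init π.trans = ∑ z, C z * π.init z := by
      unfold Fc
      rw [Finset.sum_range_one]
      have h1 : pTrunc δ 0 0 = 1 := by unfold pTrunc; norm_num
      rw [h1, one_mul]; rfl
    rw [h1]
    obtain ⟨-, -, -, hle⟩ := dW_exists MX.init MY.init MX.init_prob MY.init_prob C
    exact hle _ π.init_coupling
  | succ k ih =>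
    intro MX MY
    obtain ⟨-, -, -, hle⟩ := dW_exists MX.init MY.init MX.init_prob MY.init_prob
      (Cmat MX MY C δ (k+1))
    refine le_ciInf fun π => ?_
    rw [cost_eq, Fc_succ]
    have hw : ∀ w : X × Y, dW (MX.kernel w.1) (MY.kernel w.2) (Cmat MX MY C δ k)
        ≤ Fc C δ k (π.trans 0 w) (fun s => π.trans (s+1)) := by
      intro w
      set MX' : MarkovChain X := ⟨MX.kernel, MX.kernel w.1, MX.kernel_prob, MX.kernel_prob w.1⟩
        with hMX'
      set MY' : MarkovChain Y := ⟨MY.kernel, MY.kernel w.2, MY.kernel_prob, MY.kernel_prob w.2⟩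
        with hMY'
      have hCm : Cmat MX' MY' C δ k = Cmat MX MY C δ k :=
        Cmat_kernels MX MX' MY MY' C δ (by rw [hMX']) (by rw [hMY']) k
      set πw : MarkovCoupling MX' MY' :=
        ⟨π.trans 0 w, fun s => π.trans (s+1), π.trans_coupling 0 w,
          fun s => π.trans_coupling (s+1)⟩ with hπw
      have h2 : dOTM (pTrunc δ k) MX' MY' C ≤ Fc C δ k (π.trans 0 w) (fun s => π.trans (s+1)) := by
        have h3 := ciInf_le (dOTM_bddBelow MX' MY' hC hδ0 hδ1 k) πw
        rwa [cost_eq] at h3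
      have h1 := ih MX' MY'
      rw [hCm] at h1
      exact h1.trans h2
    calc dW MX.init MY.init (Cmat MX MY C δ (k+1))
        ≤ ∑ z, Cmat MX MY C δ (k+1) z * π.init z := hle _ π.init_coupling
      _ = δ * (∑ z, C z * π.init z)
          + (1-δ) * ∑ w, π.init w * dW (MX.kernel w.1) (MY.kernel w.2) (Cmat MX MY C δ k) := by
          show ∑ z, (δ * C z + (1-δ) * dW (MX.kernel z.1) (MY.kernel z.2) (Cmat MX MY C δ k)) * π.init z = _
          rw [Finset.mul_sum, Finset.mul_sum, ← Finset.sum_add_distrib]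
          exact Finset.sum_congr rfl fun z _ => by ring
      _ ≤ δ * (∑ z, C z * π.init z)
          + (1-δ) * ∑ w, π.init w * Fc C δ k (π.trans 0 w) (fun s => π.trans (s+1)) := by
          have h4 : (0:ℝ) ≤ 1 - δ := by linarith
          refine add_le_add_right (mul_le_mul_of_nonneg_left ?_ h4) _
          exact Finset.sum_le_sum fun w _ =>
            mul_le_mul_of_nonneg_left (hw w) (π.init_coupling.1 w)

end Stmt9Aux

/-- Recursive computation: the depth-`k` δ-discounted WL distance equals the
optimal transport cost between the initial distributions for the recursively
computed cost matrix `C^{δ,(k)}`. -/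
theorem stmt9 {X Y : Type*} [Fintype X] [Fintype Y]
    (MX : MarkovChain X) (MY : MarkovChain Y)
    (C : X × Y → ℝ) (hC : ∀ z, 0 ≤ C z)
    (δ : ℝ) (hδ0 : 0 ≤ δ) (hδ1 : δ ≤ 1) (k : ℕ) :
    dOTM (pTrunc δ k) MX MY C = dW MX.init MY.init (Cmat MX MY C δ k) :=
  le_antisymm (Stmt9Aux.dOTM_le_dW MX MY C hC δ hδ0 hδ1 k)
    (Stmt9Aux.dW_le_dOTM C hC δ hδ0 hδ1 k MX MY)
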